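/- Let G be a connected graph with burning sequence S_G = (v_1, ..., v_n) of a burning (lambda, S_G). Then there exists a spanning tree T of G such that S_G is a burning sequence for some burning of T. -/

import Mathlib

open SimpleGraph

/-- The `j`-th burned set `𝒩_j`: vertices within distance `j - k` of source `v_k` (`1 ≤ k ≤ j`). -/
def burnN {V : Type*} (G : SimpleGraph V) (s : ℕ → V) (n j : ℕ) : Set V :=
  {w | ∃ k, 1 ≤ k ∧ k ≤ n ∧ k ≤ j ∧ G.Reachable (s k) w ∧ G.dist (s k) w ≤ j - k}

/-- The set `U_j`: vertices within distance `j - k` of source `v_k` for `1 ≤ k ≤ j - 1`. -/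
def burnU {V : Type*} (G : SimpleGraph V) (s : ℕ → V) (n j : ℕ) : Set V :=
  {w | ∃ k, 1 ≤ k ∧ k ≤ n ∧ k + 1 ≤ j ∧ G.Reachable (s k) w ∧ G.dist (s k) w ≤ j - k}

/-- `(s 1, …, s n)` is a burning sequence: `v_j ∉ U_j` for `2 ≤ j ≤ n`, and `U_{n+1} = G`. -/
def IsBurningSeq {V : Type*} (G : SimpleGraph V) (s : ℕ → V) (n : ℕ) : Prop :=
  1 ≤ n ∧ (∀ j, 2 ≤ j → j ≤ n → s j ∉ burnU G s n j) ∧ ∀ w, w ∈ burnU G s n (n + 1)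

/-- The burning map `λ(w) = min { j | w ∈ 𝒩_j }`. -/
noncomputable def burnTime {V : Type*} (G : SimpleGraph V) (s : ℕ → V) (n : ℕ) (w : V) : ℕ :=
  sInf {j | w ∈ burnN G s n j}

/-- The end time `𝐓 = max_w λ(w)` of the burning. -/
noncomputable def endTime {V : Type*} [Fintype V] (G : SimpleGraph V) (s : ℕ → V) (n : ℕ) : ℕ :=
  Finset.univ.sup (burnTime G s n)

/-- A burning whose burning map is a homomorphism: `|λ(v) - λ(w)| = 1` on every edge. -/
def IsBurningHom {V : Type*} (G : SimpleGraph V) (s : ℕ → V) (n : ℕ) : Prop :=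
  IsBurningSeq G s n ∧
    ∀ v w, G.Adj v w →
      ((burnTime G s n v : ℤ) - burnTime G s n w).natAbs = 1
section AuxBurning

variable {V : Type*}

/-- Distances grow when passing to a subgraph. -/
lemma aux_dist_mono {H G : SimpleGraph V} (hle : H ≤ G) {u v : V}
    (h : H.Reachable u v) : G.dist u v ≤ H.dist u v := by
  obtain ⟨p, hp⟩ := h.exists_walk_length_eq_dist
  calc G.dist u v ≤ (p.map (SimpleGraph.Hom.ofLE hle)).length :=
        SimpleGraph.dist_le _
    _ = p.length := Walk.length_map _ _
    _ = H.dist u v := hp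

/-- Deleting a non-bridge edge preserves connectivity. -/
lemma aux_delete_connected {H : SimpleGraph V} (hc : H.Connected) {a b : V}
    (hr : (H \ fromEdgeSet {s(a, b)}).Reachable a b) :
    (H \ fromEdgeSet {s(a, b)}).Connected := by
  rw [connected_iff]
  refine ⟨fun x y => ?_, hc.nonempty⟩
  obtain ⟨p⟩ := hc.preconnected x y
  induction p with
  | nil => exact Reachable.refl _
  | @cons u v w h q ih =>
    refine Reachable.trans ?_ ih
    by_cases he : s(u, v) = s(a, b)
    · rw [Sym2.eq_iff] at he
      rcases he with ⟨rfl, rfl⟩ | ⟨rfl, rfl⟩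
      · exact hr
      · exact hr.symm
    · refine Adj.reachable ?_
      rw [sdiff_adj, fromEdgeSet_adj]
      exact ⟨h, by simp [he]⟩

/-- Descent lemma: from a "root-or-lower-neighbour" property, bound distances to sources. -/
lemma aux_descend {H : SimpleGraph V} (s : ℕ → V) (n : ℕ) (f : V → ℕ) (hc : H.Connected)
    (hP : ∀ w, (∃ k, 1 ≤ k ∧ k ≤ n ∧ w = s k ∧ f w = k - 1) ∨ ∃ u, H.Adj u w ∧ f u < f w)
    (w : V) : ∃ k, 1 ≤ k ∧ k ≤ n ∧ k - 1 + H.dist (s k) w ≤ f w := by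
  suffices h : ∀ m w, f w = m → ∃ k, 1 ≤ k ∧ k ≤ n ∧ k - 1 + H.dist (s k) w ≤ f w from
    h (f w) w rfl
  intro m
  induction m using Nat.strong_induction_on with
  | _ m ih =>
    intro w hm
    subst hm
    rcases hP w with ⟨k, hk1, hkn, rfl, hfk⟩ | ⟨u, hadj, hfu⟩
    · exact ⟨k, hk1, hkn, by rw [SimpleGraph.dist_self]; omega⟩
    · obtain ⟨k, hk1, hkn, hd⟩ := ih (f u) hfu u rfl
      have htri : H.dist (s k) w ≤ H.dist (s k) u + H.dist u w := hc.dist_triangle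
      have h1 : H.dist u w ≤ 1 := by
        simpa using SimpleGraph.dist_le (Walk.cons hadj Walk.nil)
      exact ⟨k, hk1, hkn, by omega⟩

/-- From a cycle whose `f`-maximum is at `vm`, extract two distinct neighbours of `vm`
whose removal edges are non-bridges. -/
lemma aux_cycle {H : SimpleGraph V} (f : V → ℕ) {vm : V} (c : H.Walk vm vm)
    (hcyc : c.IsCycle) (hmax : ∀ x ∈ c.support, f x ≤ f vm) :
    ∃ u₁ u₂ : V, H.Adj vm u₁ ∧ H.Adj vm u₂ ∧ u₁ ≠ u₂ ∧ f u₁ ≤ f vm ∧ f u₂ ≤ f vm ∧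
      (H \ fromEdgeSet {s(vm, u₁)}).Reachable vm u₁ ∧
      (H \ fromEdgeSet {s(vm, u₂)}).Reachable vm u₂ := by
  cases c with
  | nil => exact absurd hcyc Walk.IsCycle.not_of_nil
  | @cons _ u₁ _ h q =>
    obtain ⟨hq, hne⟩ := (Walk.cons_isCycle_iff q h).mp hcyc
    have hlen : 2 ≤ q.length := by
      have := hcyc.three_le_length
      simp only [Walk.length_cons] at this
      omega
    have hn : ¬ q.reverse.Nil := by
      rw [Walk.nil_iff_length_eq, Walk.length_reverse]
      omega
    have h₂ : H.Adj vm (q.reverse.getVert 1) := q.reverse.adj_snd hn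
    have hmem' : s(vm, q.reverse.getVert 1) ∈ q.reverse.edges := by
      have h' : q.reverse.edges = s(vm, q.reverse.getVert 1) :: q.reverse.tail.edges := by
        conv_lhs => rw [← Walk.cons_tail_eq q.reverse hn]
        simp [Walk.edges_cons]
      rw [h']
      exact List.mem_cons_self
    have hmem : s(vm, q.reverse.getVert 1) ∈ q.edges := by
      rwa [Walk.edges_reverse, List.mem_reverse] at hmem'
    obtain ⟨u₂, h₂, hmem⟩ : ∃ u₂, H.Adj vm u₂ ∧ s(vm, u₂) ∈ q.edges := ⟨_, h₂, hmem⟩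
    have hne12 : u₁ ≠ u₂ := by
      rintro rfl
      exact hne hmem
    refine ⟨u₁, u₂, h, h₂, hne12, ?_, ?_, ?_, ?_⟩
    · exact hmax u₁ (by simp [Walk.support_cons, Walk.start_mem_support])
    · exact hmax u₂ (by simp [Walk.support_cons, q.snd_mem_support_of_mem_edges hmem])
    · exact (adj_and_reachable_delete_edges_iff_exists_cycle.mpr
        ⟨vm, Walk.cons h q, hcyc, by simp [Walk.edges_cons]⟩).2
    · exact (adj_and_reachable_delete_edges_iff_exists_cycle.mpr
        ⟨vm, Walk.cons h q, hcyc, by simp [Walk.edges_cons, hmem]⟩).2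

lemma aux_surgery {H : SimpleGraph V} (f : V → ℕ) (R : V → Prop) (hc : H.Connected)
    (hP : ∀ w, R w ∨ ∃ u, H.Adj u w ∧ f u < f w) (hnac : ¬ H.IsAcyclic) :
    ∃ e ∈ H.edgeSet, (H \ fromEdgeSet {e}).Connected ∧
      ∀ w, R w ∨ ∃ u, (H \ fromEdgeSet {e}).Adj u w ∧ f u < f w := by
  classical
  simp only [IsAcyclic] at hnac
  push_neg at hnac
  obtain ⟨v, c, hcyc⟩ := hnac
  obtain ⟨vm, hvm_mem, hvm_max⟩ := c.support.toFinset.exists_max_image f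
    ⟨v, List.mem_toFinset.mpr c.start_mem_support⟩
  have hvm : vm ∈ c.support := List.mem_toFinset.mp hvm_mem
  have hmax : ∀ x ∈ (c.rotate vm hvm).support, f x ≤ f vm := by
    intro x hx
    apply hvm_max
    rw [List.mem_toFinset]
    rw [(c.rotate vm hvm).support_eq_cons] at hx
    rcases List.mem_cons.mp hx with rfl | hx
    · exact hvm
    · exact List.mem_of_mem_tail (((Walk.support_rotate c vm hvm).mem_iff).mp hx)
  obtain ⟨u₁, u₂, h₁, h₂, hne12, hf1, hf2, hr1, hr2⟩ :=
    aux_cycle f (c.rotate vm hvm) ((Walk.isCycle_rotate hvm).mpr hcyc) hmax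
  by_cases hc1 : f u₁ = f vm
  · refine ⟨s(vm, u₁), (H.mem_edgeSet).mpr h₁, aux_delete_connected hc hr1, fun w => ?_⟩
    rcases hP w with hw | ⟨u, hu, hfu⟩
    · exact Or.inl hw
    · refine Or.inr ⟨u, ?_, hfu⟩
      rw [sdiff_adj, fromEdgeSet_adj]
      refine ⟨hu, ?_⟩
      rintro ⟨heq, -⟩
      rw [Set.mem_singleton_iff, Sym2.eq_iff] at heq
      rcases heq with ⟨rfl, rfl⟩ | ⟨rfl, rfl⟩ <;> omega
  · by_cases hc2 : f u₂ = f vm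
    · refine ⟨s(vm, u₂), (H.mem_edgeSet).mpr h₂, aux_delete_connected hc hr2, fun w => ?_⟩
      rcases hP w with hw | ⟨u, hu, hfu⟩
      · exact Or.inl hw
      · refine Or.inr ⟨u, ?_, hfu⟩
        rw [sdiff_adj, fromEdgeSet_adj]
        refine ⟨hu, ?_⟩
        rintro ⟨heq, -⟩
        rw [Set.mem_singleton_iff, Sym2.eq_iff] at heq
        rcases heq with ⟨rfl, rfl⟩ | ⟨rfl, rfl⟩ <;> omega
    · have hlt1 : f u₁ < f vm := lt_of_le_of_ne hf1 hc1
      have hlt2 : f u₂ < f vm := lt_of_le_of_ne hf2 hc2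
      refine ⟨s(vm, u₁), (H.mem_edgeSet).mpr h₁, aux_delete_connected hc hr1, fun w => ?_⟩
      rcases hP w with hw | ⟨u, hu, hfu⟩
      · exact Or.inl hw
      · by_cases hw : w = vm
        · subst hw
          refine Or.inr ⟨u₂, ?_, hlt2⟩
          rw [sdiff_adj, fromEdgeSet_adj]
          refine ⟨h₂.symm, ?_⟩
          rintro ⟨heq, -⟩
          rw [Set.mem_singleton_iff, Sym2.eq_iff] at heq
          rcases heq with ⟨rfl, heq2⟩ | ⟨rfl, -⟩
          · exact h₁.ne heq2
          · exact hne12 rfl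
        · refine Or.inr ⟨u, ?_, hfu⟩
          rw [sdiff_adj, fromEdgeSet_adj]
          refine ⟨hu, ?_⟩
          rintro ⟨heq, -⟩
          rw [Set.mem_singleton_iff, Sym2.eq_iff] at heq
          rcases heq with ⟨rfl, rfl⟩ | ⟨rfl, rfl⟩
          · omega
          · exact hw rfl

end AuxBurning

/-- Theorem (spanning tree): a burning sequence of a connected graph `G` is a burning
sequence of some spanning tree of `G`. -/
theorem stmt7 {V : Type*} [Fintype V] (G : SimpleGraph V) (hc : G.Connected)
    (s : ℕ → V) (n : ℕ) (hS : IsBurningSeq G s n) :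
    ∃ T : SimpleGraph V, T ≤ G ∧ T.IsTree ∧ IsBurningSeq T s n := by
  classical
  obtain ⟨hn1, hUcond, hcov⟩ := hS
  set f : V → ℕ := fun w => sInf {m | ∃ k, 1 ≤ k ∧ k ≤ n ∧ G.dist (s k) w + (k - 1) = m} with hfdef
  have hfmem : ∀ w, ∃ k, 1 ≤ k ∧ k ≤ n ∧ G.dist (s k) w + (k - 1) = f w := fun w =>
    Nat.sInf_mem (⟨G.dist (s 1) w + (1 - 1), 1, le_refl 1, hn1, rfl⟩ :
      Set.Nonempty {m | ∃ k, 1 ≤ k ∧ k ≤ n ∧ G.dist (s k) w + (k - 1) = m})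
  have hfle : ∀ w k, 1 ≤ k → k ≤ n → f w ≤ G.dist (s k) w + (k - 1) := fun w k hk1 hkn =>
    Nat.sInf_le ⟨k, hk1, hkn, rfl⟩
  have hfn : ∀ w, f w ≤ n := by
    intro w
    obtain ⟨k, hk1, hkn, -, hr, hd⟩ := hcov w
    have := hfle w k hk1 hkn
    omega
  set R : V → Prop := fun w => ∃ k, 1 ≤ k ∧ k ≤ n ∧ w = s k ∧ f w = k - 1 with hRdef
  have hbase : ∀ w, R w ∨ ∃ u, G.Adj u w ∧ f u < f w := by
    intro w
    obtain ⟨k, hk1, hkn, hdw⟩ := hfmem w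
    by_cases h0 : G.dist (s k) w = 0
    · left
      have heq : s k = w := ((hc.preconnected _ _).dist_eq_zero_iff).mp h0
      exact ⟨k, hk1, hkn, heq.symm, by omega⟩
    · right
      obtain ⟨p, hp⟩ := (hc.preconnected (s k) w).exists_walk_length_eq_dist
      have hn' : ¬ p.reverse.Nil := by
        rw [Walk.nil_iff_length_eq, Walk.length_reverse]
        omega
      refine ⟨p.reverse.getVert 1, (p.reverse.adj_snd hn').symm, ?_⟩
      have htail : G.dist (s k) (p.reverse.getVert 1) ≤ p.reverse.tail.length := by
        rw [SimpleGraph.dist_comm]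
        exact SimpleGraph.dist_le _
      have hlen : p.reverse.tail.length + 1 = p.reverse.length := Walk.length_tail_add_one hn'
      have hrl : p.reverse.length = G.dist (s k) w := by rw [Walk.length_reverse, hp]
      have h1 := hfle (p.reverse.getVert 1) k hk1 hkn
      omega
  set Pred : SimpleGraph V → Prop := fun H =>
    H ≤ G ∧ H.Connected ∧ ∀ w, R w ∨ ∃ u, H.Adj u w ∧ f u < f w with hPreddef
  have hPG : Pred G := ⟨le_refl G, hc, hbase⟩
  have hAne : {m | ∃ H, Pred H ∧ H.edgeSet.ncard = m}.Nonempty := ⟨_, G, hPG, rfl⟩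
  obtain ⟨T, hT, hTcard⟩ := Nat.sInf_mem hAne
  have hac : T.IsAcyclic := by
    by_contra hnac
    obtain ⟨e, he, hconn', hP'⟩ := aux_surgery f R hT.2.1 hT.2.2 hnac
    have hlt : (T \ fromEdgeSet {e}).edgeSet.ncard < T.edgeSet.ncard := by
      rw [edgeSet_sdiff, edgeSet_fromEdgeSet, edgeSet_sdiff_sdiff_isDiag]
      exact Set.ncard_diff_singleton_lt_of_mem he (Set.toFinite _)
    have hmem : (T \ fromEdgeSet {e}).edgeSet.ncard ∈ {m | ∃ H, Pred H ∧ H.edgeSet.ncard = m} :=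
      ⟨T \ fromEdgeSet {e}, ⟨le_trans sdiff_le hT.1, hconn', hP'⟩, rfl⟩
    have := Nat.sInf_le hmem
    omega
  refine ⟨T, hT.1, ⟨hT.2.1, hac⟩, hn1, ?_, ?_⟩
  · intro j hj2 hjn hmem
    obtain ⟨k, hk1, hkn, hkj, hr, hd⟩ := hmem
    refine hUcond j hj2 hjn ⟨k, hk1, hkn, hkj, hr.mono hT.1, ?_⟩
    exact le_trans (aux_dist_mono hT.1 hr) hd
  · intro w
    obtain ⟨k, hk1, hkn, hd⟩ := aux_descend s n f hT.2.1 hT.2.2 w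
    refine ⟨k, hk1, hkn, by omega, hT.2.1.preconnected _ _, ?_⟩
    have := hfn w
    omega
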